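/- If a graph H contains no complete bipartite subgraph K_{a,b}, then the order complex of the image of the closure map v(X) = Γ(Γ(X)) on the face poset of the neighborhood complex N[H] has dimension at most a+b-3. -/

import Mathlib

/-- The set of common neighbors of a set `X` of vertices of `H`. -/
def commonNbrs {V : Type*} (H : SimpleGraph V) (X : Set V) : Set V :=
  {v | ∀ x ∈ X, H.Adj v x}

lemma mem_commonNbrs {V : Type*} (H : SimpleGraph V) {X : Set V} {v : V} :
    v ∈ commonNbrs H X ↔ ∀ x ∈ X, H.Adj v x := Iff.rfl

lemma commonNbrs_anti {V : Type*} (H : SimpleGraph V) {X Y : Set V} (h : X ⊆ Y) :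
    commonNbrs H Y ⊆ commonNbrs H X := fun v hv x hx => hv x (h hx)

lemma subset_double {V : Type*} (H : SimpleGraph V) (X : Set V) :
    X ⊆ commonNbrs H (commonNbrs H X) := fun x hx y hy => (hy x hx).symm

lemma triple_eq {V : Type*} (H : SimpleGraph V) (X : Set V) :
    commonNbrs H (commonNbrs H (commonNbrs H X)) = commonNbrs H X :=
  Set.Subset.antisymm (commonNbrs_anti H (subset_double H X))
    (subset_double H (commonNbrs H X))

/-- If `H` contains no complete bipartite subgraph `K_{a,b}`, then any strictly increasing
chain `c : Fin (m+1) → Set V` of faces of the neighborhood complex lying in the image of the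
closure map `v(X) = Γ(Γ(X))` has `m ≤ a + b - 3`; i.e. the order complex of the image of `v`
on the face poset of `N[H]` has dimension at most `a + b - 3`. -/
theorem dim_order_complex_le {V : Type*} (H : SimpleGraph V) (a b : ℕ)
    (hbip : ¬ ∃ (U W : Finset V), Disjoint U W ∧ U.card = a ∧ W.card = b ∧
      ∀ u ∈ U, ∀ w ∈ W, H.Adj u w)
    (m : ℕ) (c : Fin (m + 1) → Set V)
    (hface : ∀ i, (c i).Nonempty ∧ (commonNbrs H (c i)).Nonempty)
    (himage : ∀ i, ∃ X : Set V, X.Nonempty ∧ (commonNbrs H X).Nonempty ∧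
      c i = commonNbrs H (commonNbrs H X))
    (hchain : StrictMono c) :
    (m : ℤ) ≤ (a : ℤ) + b - 3 := by
  classical
  by_contra hcon
  push_neg at hcon
  have hab : a + b ≤ m + 2 := by omega
  have hmono := hchain.monotone
  have hclosed : ∀ i, commonNbrs H (commonNbrs H (c i)) = c i := by
    intro i
    obtain ⟨X, -, -, hXe⟩ := himage i
    rw [hXe]
    exact triple_eq H (commonNbrs H X)
  -- choose the u-vertices
  have hu : ∀ i : Fin (m+1), ∃ x, x ∈ c i ∧ ∀ j : Fin (m+1), j < i → x ∉ c j := by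
    intro i
    rcases Nat.eq_zero_or_pos i.1 with h0 | hp
    · obtain ⟨x, hx⟩ := (hface i).1
      exact ⟨x, hx, fun j hj => absurd (Fin.lt_def.mp hj) (by omega)⟩
    · set i' : Fin (m+1) := ⟨i.1 - 1, by omega⟩ with hi'
      have hlt : i' < i := by
        rw [Fin.lt_def]; simp only [hi']; omega
      obtain ⟨x, hx, hnx⟩ := Set.exists_of_ssubset (hchain hlt)
      refine ⟨x, hx, fun j hj hxj => hnx ?_⟩
      have hji : j ≤ i' := by
        rw [Fin.le_def]; simp only [hi']
        have := Fin.lt_def.mp hj; omega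
      exact hmono hji hxj
  -- choose the w-vertices
  have hw : ∀ i : Fin (m+1), ∃ y, y ∈ commonNbrs H (c i) ∧
      ∀ j : Fin (m+1), i < j → y ∉ commonNbrs H (c j) := by
    intro i
    rcases eq_or_lt_of_le (Nat.le_of_lt_succ i.2) with h0 | hp
    · obtain ⟨y, hy⟩ := (hface i).2
      exact ⟨y, hy, fun j hj => absurd (Fin.lt_def.mp hj) (by omega)⟩
    · set i' : Fin (m+1) := ⟨i.1 + 1, by omega⟩ with hi'
      have hlt : i < i' := by rw [Fin.lt_def]; simp only [hi']; omega
      have hsub : commonNbrs H (c i') ⊆ commonNbrs H (c i) :=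
        commonNbrs_anti H (hmono hlt.le)
      have hne : commonNbrs H (c i') ≠ commonNbrs H (c i) := by
        intro h
        have h2 := congrArg (commonNbrs H) h
        rw [hclosed, hclosed] at h2
        exact (hchain hlt).ne h2.symm
      obtain ⟨y, hy, hny⟩ := Set.exists_of_ssubset (hsub.ssubset_of_ne hne)
      refine ⟨y, hy, fun j hj hyj => hny ?_⟩
      have hij : i' ≤ j := by
        rw [Fin.le_def]; simp only [hi']
        have := Fin.lt_def.mp hj; omega
      exact commonNbrs_anti H (hmono hij) hyj
  choose u hu1 hu2 using hu
  choose w hw1 hw2 using hw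
  set ι : ℕ → Fin (m+1) := fun n => ⟨min n m, by omega⟩ with hι
  have hιle : ∀ {i j : ℕ}, i ≤ j → ι i ≤ ι j := by
    intro i j h; rw [Fin.le_def]; simp only [hι]; omega
  have hιlt : ∀ {i j : ℕ}, i < j → j ≤ m → ι i < ι j := by
    intro i j h hj; rw [Fin.lt_def]; simp only [hι]; omega
  have key : ∀ i j : ℕ, i ≤ j → H.Adj (w (ι j)) (u (ι i)) := by
    intro i j hij
    have h1 := hw1 (ι j)
    rw [mem_commonNbrs] at h1
    exact h1 _ (hmono (hιle hij) (hu1 (ι i)))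
  have uinj : ∀ i j : ℕ, i < j → j ≤ m → u (ι i) ≠ u (ι j) := by
    intro i j hij hj h
    exact hu2 (ι j) (ι i) (hιlt hij hj) (h ▸ hu1 (ι i))
  have winj : ∀ i j : ℕ, i < j → j ≤ m → w (ι i) ≠ w (ι j) := by
    intro i j hij hj h
    exact hw2 (ι i) (ι j) (hιlt hij hj) (h ▸ hw1 (ι j))
  have uinj' : ∀ i j : ℕ, i ≤ m → j ≤ m → u (ι i) = u (ι j) → i = j := by
    intro i j hi hj h
    rcases lt_trichotomy i j with h' | h' | h'
    · exact absurd h (uinj i j h' hj)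
    · exact h'
    · exact absurd h.symm (uinj j i h' hi)
  have winj' : ∀ i j : ℕ, i ≤ m → j ≤ m → w (ι i) = w (ι j) → i = j := by
    intro i j hi hj h
    rcases lt_trichotomy i j with h' | h' | h'
    · exact absurd h (winj i j h' hj)
    · exact h'
    · exact absurd h.symm (winj j i h' hi)
  rcases Nat.eq_zero_or_pos a with ha | ha
  · -- a = 0 : just need b distinct vertices
    have hb : b ≤ m + 2 := by omega
    set S : Finset V := insert (w (ι m)) ((Finset.range (m+1)).image fun n => u (ι n)) with hS
    have himg : ((Finset.range (m+1)).image fun n => u (ι n)).card = m + 1 := by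
      rw [Finset.card_image_of_injOn, Finset.card_range]
      intro i hi j hj h
      exact uinj' i j (by simpa using Nat.lt_succ_iff.mp (Finset.mem_range.mp hi))
        (Nat.lt_succ_iff.mp (Finset.mem_range.mp hj)) h
    have hnm : w (ι m) ∉ (Finset.range (m+1)).image fun n => u (ι n) := by
      simp only [Finset.mem_image, Finset.mem_range]
      rintro ⟨n, hn, h⟩
      exact (key n m (Nat.lt_succ_iff.mp hn)).ne h.symm
    have hScard : S.card = m + 2 := by
      rw [hS, Finset.card_insert_of_notMem hnm, himg]
    obtain ⟨W, hWsub, hWcard⟩ := Finset.exists_subset_card_eq (s := S) (n := b) (by omega)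
    exact hbip ⟨∅, W, Finset.disjoint_empty_left _, by simp [ha], hWcard,
      fun u hu => absurd hu (Finset.notMem_empty u)⟩
  rcases Nat.eq_zero_or_pos b with hb | hb
  · -- b = 0 : just need a distinct vertices
    have ha2 : a ≤ m + 2 := by omega
    set S : Finset V := insert (u (ι 0)) ((Finset.range (m+1)).image fun n => w (ι n)) with hS
    have himg : ((Finset.range (m+1)).image fun n => w (ι n)).card = m + 1 := by
      rw [Finset.card_image_of_injOn, Finset.card_range]
      intro i hi j hj h
      exact winj' i j (Nat.lt_succ_iff.mp (Finset.mem_range.mp hi))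
        (Nat.lt_succ_iff.mp (Finset.mem_range.mp hj)) h
    have hnm : u (ι 0) ∉ (Finset.range (m+1)).image fun n => w (ι n) := by
      simp only [Finset.mem_image, Finset.mem_range]
      rintro ⟨n, hn, h⟩
      exact (key 0 n (Nat.zero_le n)).ne' h.symm
    have hScard : S.card = m + 2 := by
      rw [hS, Finset.card_insert_of_notMem hnm, himg]
    obtain ⟨U, hUsub, hUcard⟩ := Finset.exists_subset_card_eq (s := S) (n := a) (by omega)
    exact hbip ⟨U, ∅, Finset.disjoint_empty_right _, hUcard, by simp [hb],
      fun u _ w hw => absurd hw (Finset.notMem_empty w)⟩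
  · -- main case : a ≥ 1, b ≥ 1
    set U : Finset V := (Finset.range a).image fun n => u (ι n) with hU
    set W : Finset V := (Finset.range b).image fun k => w (ι (a - 1 + k)) with hW
    have hUcard : U.card = a := by
      rw [hU, Finset.card_image_of_injOn, Finset.card_range]
      intro i hi j hj h
      exact uinj' i j (by have := Finset.mem_range.mp hi; omega)
        (by have := Finset.mem_range.mp hj; omega) h
    have hWcard : W.card = b := by
      rw [hW, Finset.card_image_of_injOn, Finset.card_range]
      intro i hi j hj h
      have hi' := Finset.mem_range.mp hi
      have hj' := Finset.mem_range.mp hj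
      have := winj' (a - 1 + i) (a - 1 + j) (by omega) (by omega) h
      omega
    have hdisj : Disjoint U W := by
      rw [Finset.disjoint_left]
      intro x hxU hxW
      rw [hU, Finset.mem_image] at hxU
      rw [hW, Finset.mem_image] at hxW
      obtain ⟨n, hn, hn'⟩ := hxU
      obtain ⟨k, hk, hk'⟩ := hxW
      have hle : n ≤ a - 1 + k := by have := Finset.mem_range.mp hn; omega
      exact (key n (a - 1 + k) hle).ne (hk'.trans hn'.symm)
    refine hbip ⟨U, W, hdisj, hUcard, hWcard, ?_⟩
    intro x hx y hy
    rw [hU, Finset.mem_image] at hx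
    rw [hW, Finset.mem_image] at hy
    obtain ⟨n, hn, hn'⟩ := hx
    obtain ⟨k, hk, hk'⟩ := hy
    have hle : n ≤ a - 1 + k := by have := Finset.mem_range.mp hn; omega
    rw [← hn', ← hk']
    exact (key n (a - 1 + k) hle).symm
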